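/- arXiv:1605.01192 — 5 statements merged into one kernel-verified Lean document; each statement's English description precedes it below -/
import Mathlib

section
/- Let F be a group generated by a finite set V, let X ⊆ F, and let ε, δ > 0. Assume every positive definite function φ on F with φ(1) = 1 and inf_{v∈V} |φ(v)| ≥ 1 − δ satisfies inf_{x∈X} |φ(x)| ≥ ε. Then every conditionally negative definite function ψ on F satisfies sup_{x∈X} ψ(x) ≤ ((−log ε)/δ) · sup_{v∈V} ψ(v). -/
open Finset

/-- A function `φ : F → ℂ` is positive definite if all the Gram-type sums
`Σᵢⱼ cᵢ c̄ⱼ φ(gⱼ⁻¹ gᵢ)` are nonnegative reals. -/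
def IsPosDefFn {F : Type*} [Group F] (φ : F → ℂ) : Prop :=
  ∀ (n : ℕ) (g : Fin n → F) (c : Fin n → ℂ),
    0 ≤ (∑ i, ∑ j, c i * (starRingEnd ℂ) (c j) * φ ((g j)⁻¹ * g i)).re ∧
      (∑ i, ∑ j, c i * (starRingEnd ℂ) (c j) * φ ((g j)⁻¹ * g i)).im = 0

/-- A function `ψ : F → ℝ` is conditionally negative definite if `ψ(1) = 0`,
`ψ(g⁻¹) = ψ(g)`, and `Σᵢⱼ cᵢ cⱼ ψ(gⱼ⁻¹ gᵢ) ≤ 0` whenever `Σᵢ cᵢ = 0`. -/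
def IsCondNegDefFn {F : Type*} [Group F] (ψ : F → ℝ) : Prop :=
  ψ 1 = 0 ∧ (∀ g : F, ψ g⁻¹ = ψ g) ∧
    ∀ (n : ℕ) (g : Fin n → F) (c : Fin n → ℝ), (∑ i, c i) = 0 →
      ∑ i, ∑ j, c i * c j * ψ ((g j)⁻¹ * g i) ≤ 0

lemma real_exp_eq_tsum (x : ℝ) : Real.exp x = ∑' n : ℕ, x ^ n / (n.factorial : ℝ) := by
  rw [Real.exp_eq_exp_ℝ, NormedSpace.exp_eq_tsum_div]

lemma gram_rep {n : ℕ} (K : Matrix (Fin n) (Fin n) ℝ)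
    (hsym : ∀ i j, K i j = K j i)
    (hpsd : ∀ c : Fin n → ℝ, 0 ≤ ∑ i, ∑ j, c i * c j * K i j) :
    ∃ B : Matrix (Fin n) (Fin n) ℝ, ∀ i j, K i j = ∑ k, B k i * B k j := by
  have hK : K.PosSemidef := by
    refine Matrix.PosSemidef.of_dotProduct_mulVec_nonneg ?_ ?_
    · ext i j
      simp only [Matrix.conjTranspose_apply, star_trivial]
      exact hsym j i
    · intro x
      have h := hpsd x
      have heq : dotProduct (star x) (K.mulVec x) = ∑ i, ∑ j, x i * x j * K i j := by
        simp only [dotProduct, Matrix.mulVec, star_trivial, Finset.mul_sum]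
        exact Finset.sum_congr rfl fun i _ => Finset.sum_congr rfl fun j _ => by ring
      rw [heq]
      exact h
  obtain ⟨B, hB⟩ : ∃ B : Matrix (Fin n) (Fin n) ℝ, K = star B * B := by
    open scoped MatrixOrder in exact CStarAlgebra.nonneg_iff_eq_star_mul_self.mp hK.nonneg
  refine ⟨B, fun i j => ?_⟩
  rw [hB]
  simp [Matrix.mul_apply, Matrix.conjTranspose_apply, Matrix.star_apply]

lemma pow_quad {n : ℕ} (K B : Matrix (Fin n) (Fin n) ℝ)
    (hB : ∀ i j, K i j = ∑ k, B k i * B k j) (m : ℕ) (c : Fin n → ℝ) :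
    0 ≤ ∑ i, ∑ j, c i * c j * K i j ^ m := by
  have key : ∀ i j, K i j ^ m
      = ∑ p : Fin m → Fin n, (∏ l, B (p l) i) * (∏ l, B (p l) j) := by
    intro i j
    have h1 : K i j ^ m = ∏ _l : Fin m, (∑ k, B k i * B k j) := by
      rw [hB]; simp [Finset.prod_const]
    rw [h1, Finset.prod_univ_sum]
    rw [show (Fintype.piFinset fun _ : Fin m => (univ : Finset (Fin n))) = univ by
      exact Fintype.piFinset_univ]
    exact Finset.sum_congr rfl fun p _ => by rw [Finset.prod_mul_distrib]
  calc (0:ℝ) ≤ ∑ p : Fin m → Fin n, (∑ i, c i * ∏ l, B (p l) i) ^ 2 :=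
        Finset.sum_nonneg fun p _ => sq_nonneg _
    _ = ∑ p : Fin m → Fin n, ∑ i, ∑ j,
          c i * c j * ((∏ l, B (p l) i) * (∏ l, B (p l) j)) := by
        refine Finset.sum_congr rfl fun p _ => ?_
        rw [sq, Finset.sum_mul_sum]
        exact Finset.sum_congr rfl fun i _ => Finset.sum_congr rfl fun j _ => by ring
    _ = ∑ i, ∑ j, ∑ p : Fin m → Fin n,
          c i * c j * ((∏ l, B (p l) i) * (∏ l, B (p l) j)) := by
        rw [Finset.sum_comm]
        exact Finset.sum_congr rfl fun i _ => Finset.sum_comm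
    _ = ∑ i, ∑ j, c i * c j * K i j ^ m := by
        refine Finset.sum_congr rfl fun i _ => Finset.sum_congr rfl fun j _ => ?_
        rw [key, Finset.mul_sum]

lemma exp_quad {n : ℕ} (K : Matrix (Fin n) (Fin n) ℝ)
    (hsym : ∀ i j, K i j = K j i)
    (hpsd : ∀ c : Fin n → ℝ, 0 ≤ ∑ i, ∑ j, c i * c j * K i j)
    (c : Fin n → ℝ) :
    0 ≤ ∑ i, ∑ j, c i * c j * Real.exp (K i j) := by
  obtain ⟨B, hB⟩ := gram_rep K hsym hpsd
  have hflat : ∑ i, ∑ j, c i * c j * Real.exp (K i j)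
      = ∑ p : Fin n × Fin n, c p.1 * c p.2 * Real.exp (K p.1 p.2) := by
    rw [Fintype.sum_prod_type]
  have hsummable : ∀ p : Fin n × Fin n,
      Summable (fun m : ℕ => c p.1 * c p.2 * (K p.1 p.2 ^ m / (m.factorial : ℝ))) :=
    fun p => (Real.summable_pow_div_factorial _).mul_left _
  have hterm : ∀ p : Fin n × Fin n, c p.1 * c p.2 * Real.exp (K p.1 p.2)
      = ∑' m : ℕ, c p.1 * c p.2 * (K p.1 p.2 ^ m / (m.factorial : ℝ)) := by
    intro p
    rw [real_exp_eq_tsum, tsum_mul_left]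
  rw [hflat]
  calc (0:ℝ) ≤ ∑' m : ℕ, ∑ p : Fin n × Fin n,
        c p.1 * c p.2 * (K p.1 p.2 ^ m / (m.factorial : ℝ)) := by
        refine tsum_nonneg fun m => ?_
        have h1 : ∑ p : Fin n × Fin n, c p.1 * c p.2 * (K p.1 p.2 ^ m / (m.factorial : ℝ))
            = (∑ i, ∑ j, c i * c j * K i j ^ m) * ((m.factorial : ℝ))⁻¹ := by
          rw [Fintype.sum_prod_type, Finset.sum_mul]
          refine Finset.sum_congr rfl fun i _ => ?_
          rw [Finset.sum_mul]
          exact Finset.sum_congr rfl fun j _ => by rw [div_eq_mul_inv]; ring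
        rw [h1]
        exact mul_nonneg (pow_quad K B hB m c) (by positivity)
    _ = ∑ p : Fin n × Fin n, c p.1 * c p.2 * Real.exp (K p.1 p.2) := by
        rw [Summable.tsum_finsetSum fun p _ => hsummable p]
        exact Finset.sum_congr rfl fun p _ => (hterm p).symm


section cnd
variable {F : Type*} [Group F]

lemma key_sum {n : ℕ} (c f : Fin n → ℝ) :
    ∑ i, ∑ j, c i * c j * f i = (∑ i, c i) * ∑ i, c i * f i := by
  have h : ∀ i, ∑ j, c i * c j * f i = (c i * f i) * ∑ j, c j := by
    intro i
    rw [Finset.mul_sum]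
    exact Finset.sum_congr rfl fun j _ => by ring
  simp_rw [h]
  rw [← Finset.sum_mul, mul_comm]

lemma key_sum' {n : ℕ} (c f : Fin n → ℝ) :
    ∑ i, ∑ j, c i * c j * f j = (∑ i, c i) * ∑ i, c i * f i := by
  have h : ∀ i, ∑ j, c i * c j * f j = c i * ∑ j, c j * f j := by
    intro i
    rw [Finset.mul_sum]
    exact Finset.sum_congr rfl fun j _ => by ring
  simp_rw [h]
  rw [← Finset.sum_mul]

lemma neg_quad (ψ : F → ℝ) (hψ : IsCondNegDefFn ψ) {n : ℕ} (g : Fin n → F) (c : Fin n → ℝ) :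
    0 ≤ ∑ i, ∑ j, c i * c j * (ψ (g i) + ψ (g j) - ψ ((g j)⁻¹ * g i)) := by
  obtain ⟨h1, hinv, hneg⟩ := hψ
  set s := ∑ i, c i with hs
  set L := ∑ i, c i * ψ (g i) with hL
  have h := hneg (n+1) (Fin.cons 1 g) (Fin.cons (-s) c)
    (by rw [Fin.sum_cons, ← hs]; ring)
  simp only [Fin.sum_univ_succ, Fin.cons_zero, Fin.cons_succ, inv_one, one_mul, mul_one,
    inv_mul_cancel, h1, mul_zero, hinv, zero_add] at h
  -- h should now be : ∑ j, -s * c j * ψ (g j) + ∑ i, (c i * -s * ψ (g i) + ∑ j, c i * c j * ψ ((g j)⁻¹ * g i)) ≤ 0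
  have e1 : ∑ j, -s * c j * ψ (g j) = -s * L := by
    rw [hL, Finset.mul_sum]
    exact Finset.sum_congr rfl fun j _ => by ring
  have e2 : ∑ i, (c i * -s * ψ (g i) + ∑ j, c i * c j * ψ ((g j)⁻¹ * g i))
      = -s * L + ∑ i, ∑ j, c i * c j * ψ ((g j)⁻¹ * g i) := by
    rw [Finset.sum_add_distrib]
    congr 1
    rw [hL, Finset.mul_sum]
    exact Finset.sum_congr rfl fun i _ => by ring
  rw [e1, e2] at h
  have expand : ∑ i, ∑ j, c i * c j * (ψ (g i) + ψ (g j) - ψ ((g j)⁻¹ * g i))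
      = (∑ i, ∑ j, c i * c j * ψ (g i)) + (∑ i, ∑ j, c i * c j * ψ (g j))
        - ∑ i, ∑ j, c i * c j * ψ ((g j)⁻¹ * g i) := by
    rw [← Finset.sum_add_distrib, ← Finset.sum_sub_distrib]
    refine Finset.sum_congr rfl fun i _ => ?_
    rw [← Finset.sum_add_distrib, ← Finset.sum_sub_distrib]
    exact Finset.sum_congr rfl fun j _ => by ring
  rw [expand, key_sum c (fun i => ψ (g i)), key_sum' c (fun i => ψ (g i)), ← hs, ← hL]
  linarith

lemma schoenberg_real (ψ : F → ℝ) (hψ : IsCondNegDefFn ψ) (t : ℝ) (ht : 0 ≤ t)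
    {n : ℕ} (g : Fin n → F) (c : Fin n → ℝ) :
    0 ≤ ∑ i, ∑ j, c i * c j * Real.exp (-t * ψ ((g j)⁻¹ * g i)) := by
  set K : Matrix (Fin n) (Fin n) ℝ :=
    Matrix.of fun i j => t * (ψ (g i) + ψ (g j) - ψ ((g j)⁻¹ * g i)) with hK
  have hKapp : ∀ i j, K i j = t * (ψ (g i) + ψ (g j) - ψ ((g j)⁻¹ * g i)) := fun i j => rfl
  have hsymψ : ∀ i j : Fin n, ψ ((g i)⁻¹ * g j) = ψ ((g j)⁻¹ * g i) := by
    intro i j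
    rw [← hψ.2.1 ((g i)⁻¹ * g j), mul_inv_rev, inv_inv]
  have hsym : ∀ i j, K i j = K j i := by
    intro i j
    rw [hKapp, hKapp, hsymψ j i]
    ring
  have hpsd : ∀ c : Fin n → ℝ, 0 ≤ ∑ i, ∑ j, c i * c j * K i j := by
    intro d
    have h := neg_quad ψ hψ g d
    have := mul_nonneg ht h
    calc (0:ℝ) ≤ t * ∑ i, ∑ j, d i * d j * (ψ (g i) + ψ (g j) - ψ ((g j)⁻¹ * g i)) := this
      _ = ∑ i, ∑ j, d i * d j * K i j := by
          rw [Finset.mul_sum]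
          refine Finset.sum_congr rfl fun i _ => ?_
          rw [Finset.mul_sum]
          exact Finset.sum_congr rfl fun j _ => by rw [hKapp]; ring
  have h := exp_quad K hsym hpsd (fun i => c i * Real.exp (-t * ψ (g i)))
  calc (0:ℝ) ≤ ∑ i, ∑ j, (c i * Real.exp (-t * ψ (g i))) * (c j * Real.exp (-t * ψ (g j)))
        * Real.exp (K i j) := h
    _ = ∑ i, ∑ j, c i * c j * Real.exp (-t * ψ ((g j)⁻¹ * g i)) := by
      refine Finset.sum_congr rfl fun i _ => Finset.sum_congr rfl fun j _ => ?_
      rw [hKapp]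
      rw [show (c i * Real.exp (-t * ψ (g i))) * (c j * Real.exp (-t * ψ (g j)))
          * Real.exp (t * (ψ (g i) + ψ (g j) - ψ ((g j)⁻¹ * g i)))
        = c i * c j * (Real.exp (-t * ψ (g i)) * Real.exp (-t * ψ (g j))
          * Real.exp (t * (ψ (g i) + ψ (g j) - ψ ((g j)⁻¹ * g i)))) from by ring]
      rw [← Real.exp_add, ← Real.exp_add]
      congr 2
      ring

end cnd

section main
variable {F : Type*} [Group F]

lemma schoenberg (ψ : F → ℝ) (hψ : IsCondNegDefFn ψ) (t : ℝ) (ht : 0 ≤ t) :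
    IsPosDefFn (fun g => ((Real.exp (-t * ψ g) : ℝ) : ℂ)) := by
  intro n g c
  set S := ∑ i, ∑ j, c i * (starRingEnd ℂ) (c j) *
    ((Real.exp (-t * ψ ((g j)⁻¹ * g i)) : ℝ) : ℂ) with hS
  have hsymψ : ∀ i j : Fin n, ψ ((g i)⁻¹ * g j) = ψ ((g j)⁻¹ * g i) := by
    intro i j
    rw [← hψ.2.1 ((g i)⁻¹ * g j), mul_inv_rev, inv_inv]
  have hconj : (starRingEnd ℂ) S = S := by
    rw [hS, map_sum]
    rw [Finset.sum_comm]
    refine Finset.sum_congr rfl fun i _ => ?_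
    rw [map_sum]
    refine Finset.sum_congr rfl fun j _ => ?_
    simp only [map_mul, Complex.conj_conj, Complex.conj_ofReal]
    rw [hsymψ i j]
    ring
  constructor
  · show 0 ≤ S.re
    have hre : S.re = (∑ i, ∑ j, (c i).re * (c j).re * Real.exp (-t * ψ ((g j)⁻¹ * g i)))
        + ∑ i, ∑ j, (c i).im * (c j).im * Real.exp (-t * ψ ((g j)⁻¹ * g i)) := by
      rw [hS, Complex.re_sum]
      rw [← Finset.sum_add_distrib]
      refine Finset.sum_congr rfl fun i _ => ?_
      rw [Complex.re_sum, ← Finset.sum_add_distrib]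
      refine Finset.sum_congr rfl fun j _ => ?_
      simp only [Complex.mul_re, Complex.mul_im, Complex.conj_re, Complex.conj_im,
        Complex.ofReal_re, Complex.ofReal_im]
      ring
    rw [hre]
    have h1 := schoenberg_real ψ hψ t ht g (fun i => (c i).re)
    have h2 := schoenberg_real ψ hψ t ht g (fun i => (c i).im)
    exact add_nonneg h1 h2
  · show S.im = 0
    exact Complex.conj_eq_iff_im.mp hconj

lemma psi_nonneg (ψ : F → ℝ) (hψ : IsCondNegDefFn ψ) (a : F) : 0 ≤ ψ a := by
  have h := hψ.2.2 2 ![a, 1] ![1, -1] (by simp [Fin.sum_univ_two])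
  simp only [Fin.sum_univ_two, Matrix.cons_val_zero, Matrix.cons_val_one, Matrix.head_cons,
    inv_mul_cancel, inv_one, one_mul, mul_one, hψ.1, hψ.2.1, mul_zero, zero_add,
    neg_mul, mul_neg, one_mul, neg_neg] at h
  linarith

end main


/-- If every normalized positive definite function on `F` that is `≥ 1 - δ` in modulus
on a finite generating set `V` is `≥ ε` in modulus on `X`, then every conditionally
negative definite function `ψ` satisfies `sup_{x ∈ X} ψ(x) ≤ ((−log ε)/δ) · sup_{v ∈ V} ψ(v)`. -/
theorem stmt_2 {F : Type*} [Group F] (V : Finset F) (hVne : V.Nonempty)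
    (hVgen : Subgroup.closure (V : Set F) = ⊤) (X : Set F) (ε δ : ℝ)
    (hε : 0 < ε) (hδ : 0 < δ)
    (hyp : ∀ φ : F → ℂ, IsPosDefFn φ → φ 1 = 1 →
      (∀ v ∈ V, 1 - δ ≤ ‖φ v‖) → ∀ x ∈ X, ε ≤ ‖φ x‖)
    (ψ : F → ℝ) (hψ : IsCondNegDefFn ψ) :
    ∀ x ∈ X, ψ x ≤ ((-Real.log ε) / δ) * V.sup' hVne ψ := by
  intro x hx
  have hpos := psi_nonneg ψ hψ
  set M := V.sup' hVne ψ with hM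
  obtain ⟨v₀, hv₀⟩ := hVne
  have hM0 : 0 ≤ M := le_trans (hpos v₀) (Finset.le_sup' ψ hv₀)
  have key : ∀ t : ℝ, 0 < t → (∀ v ∈ V, 1 - δ ≤ Real.exp (-t * ψ v)) →
      t * ψ x ≤ -Real.log ε := by
    intro t ht hV
    have hφ := schoenberg ψ hψ t ht.le
    have h1 : (fun g => ((Real.exp (-t * ψ g) : ℝ) : ℂ)) 1 = 1 := by
      simp [hψ.1]
    have habs : ∀ g : F, ‖((Real.exp (-t * ψ g) : ℝ) : ℂ)‖
        = Real.exp (-t * ψ g) := by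
      intro g
      rw [Complex.norm_real, Real.norm_eq_abs, abs_of_pos (Real.exp_pos _)]
    have h2 := hyp _ hφ h1 (fun v hv => by rw [habs]; exact hV v hv) x hx
    rw [habs] at h2
    rw [← Real.exp_log hε] at h2
    have h3 := Real.exp_le_exp.mp h2
    linarith
  rcases eq_or_lt_of_le hM0 with hMeq | hMpos
  · have hψV : ∀ v ∈ V, ψ v = 0 := by
      intro v hv
      have h1 : ψ v ≤ M := Finset.le_sup' ψ hv
      have h2 := hpos v
      rw [← hMeq] at h1
      linarith
    have hx0 : ∀ t : ℝ, 0 < t → t * ψ x ≤ -Real.log ε := by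
      intro t ht
      refine key t ht fun v hv => ?_
      rw [hψV v hv, mul_zero, Real.exp_zero]
      linarith
    have hxle : ψ x ≤ 0 := by
      by_contra hc
      push_neg at hc
      have h := hx0 ((|(-Real.log ε)| + 1) / ψ x) (by positivity)
      rw [div_mul_cancel₀ _ (ne_of_gt hc)] at h
      have h1 := le_abs_self (-Real.log ε)
      linarith
    have hx0' : ψ x = 0 := le_antisymm hxle (hpos x)
    rw [hx0', ← hMeq, mul_zero]
  · have hVcond : ∀ v ∈ V, 1 - δ ≤ Real.exp (-(δ / M) * ψ v) := by
      intro v hv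
      have hv' : ψ v ≤ M := Finset.le_sup' ψ hv
      have hbound : 1 - δ ≤ Real.exp (-δ) := by
        have := Real.add_one_le_exp (-δ)
        linarith
      refine hbound.trans (Real.exp_le_exp.mpr ?_)
      have h := mul_le_mul_of_nonneg_left hv' (le_of_lt (div_pos hδ hMpos))
      rw [div_mul_cancel₀ δ (ne_of_gt hMpos)] at h
      linarith
    have h := key (δ / M) (div_pos hδ hMpos) hVcond
    have h2 := mul_le_mul_of_nonneg_left h (div_nonneg hM0 hδ.le)
    have h3 : (M / δ) * ((δ / M) * ψ x) = ψ x := by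
      field_simp
    rw [h3] at h2
    have h4 : M / δ * -Real.log ε = -Real.log ε / δ * M := by ring
    rw [h4] at h2
    exact h2
end

section
/- Let π: K ↠ K' be a surjective group homomorphism of finitely generated groups, V a finite generating set of K, V' = π(V). Suppose Cay(K,V) contains Cay(L,U) as a subgraph via an injective map ι: L → K compatible with the labeled edges, and suppose there is a group L' and a bijection f: π(ι(L)) → L' such that f∘π∘ι: L → L' is a surjective group homomorphism. Then the Cayley graph of the restricted permutational wreath product ℤ/2ℤ ≀_{L'} L with generating set {δ_{1_{L'}}} ∪ U embeds as a subgraph of the Cayley graph of ℤ/2ℤ ≀_{K'} K with generating set {δ_{1_{K'}}} ∪ V. -/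
open Function

/-- The restricted direct product `⊕_Q A`: functions `Q → A` with finite support,
as a subgroup of the full product. -/
def RestrictedProd (Q A : Type*) [Group A] : Subgroup (Q → A) where
  carrier := {f | (Function.mulSupport f).Finite}
  one_mem' := by
    have : Function.mulSupport (1 : Q → A) = ∅ := by
      ext q; simp [Function.mem_mulSupport]
    show (Function.mulSupport (1 : Q → A)).Finite
    rw [this]
    exact Set.finite_empty
  mul_mem' := by
    intro a b ha hb
    exact (ha.union hb).subset (Function.mulSupport_mul a b)
  inv_mem' := by
    intro a ha
    simpa using ha

/-- The automorphism of `⊕_Q A` induced by a permutation of the index set `Q`,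
`(σ · φ)(q) = φ(σ⁻¹ q)`. -/
def permAut {Q A : Type*} [Group A] (σ : Equiv.Perm Q) :
    RestrictedProd Q A ≃* RestrictedProd Q A where
  toFun f := ⟨fun q => f.1 (σ⁻¹ q), by
    have : Function.mulSupport (fun q => f.1 (σ⁻¹ q)) ⊆ ⇑σ '' (Function.mulSupport f.1) := by
      intro q hq
      exact ⟨σ⁻¹ q, hq, by simp⟩
    exact (f.2.image _).subset this⟩
  invFun f := ⟨fun q => f.1 (σ q), by
    have : Function.mulSupport (fun q => f.1 (σ q)) ⊆ ⇑σ⁻¹ '' (Function.mulSupport f.1) := by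
      intro q hq
      exact ⟨σ q, hq, by simp⟩
    exact (f.2.image _).subset this⟩
  left_inv f := by ext q; simp
  right_inv f := by ext q; simp
  map_mul' f g := by ext q; rfl

/-- The action of `B` on `⊕_Q A` by permutation of the indices through a
homomorphism `B →* Perm Q`. -/
def wreathAction {Q A B : Type*} [Group A] [Group B] (act : B →* Equiv.Perm Q) :
    B →* MulAut (RestrictedProd Q A) where
  toFun b := permAut (act b)
  map_one' := by ext f q; simp [permAut]
  map_mul' b₁ b₂ := by ext f q; simp [permAut, mul_assoc]

/-- The restricted permutational wreath product `A ≀_Q B` with the action of `B` on `Q`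
given by `act : B →* Perm Q`: the semidirect product `(⊕_Q A) ⋊ B`. -/
abbrev Wreath (Q A B : Type*) [Group A] [Group B] (act : B →* Equiv.Perm Q) :=
  SemidirectProduct (RestrictedProd Q A) B (wreathAction act)

/-- Left translation action of `Q` on itself composed with `p : B →* Q`. -/
def leftTransPerm {B Q : Type*} [Group B] [Group Q] (p : B →* Q) : B →* Equiv.Perm Q :=
  (MulAction.toPermHom Q Q).comp p

open scoped Classical in
/-- The element `δ` of `⊕_Q A`, supported at `q₀` with value `a`. -/
noncomputable def deltaFn {Q A : Type*} [Group A] (q₀ : Q) (a : A) : RestrictedProd Q A :=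
  ⟨fun q => if q = q₀ then a else 1, by
    apply Set.Finite.subset (Set.finite_singleton q₀)
    intro q hq
    simp only [Function.mem_mulSupport] at hq
    by_contra h
    simp only [Set.mem_singleton_iff] at h
    simp [h] at hq⟩

/-- The Cayley graph of a group with respect to a (symmetrized) generating set. -/
def cayleyGraph (G : Type*) [Group G] (S : Set G) : SimpleGraph G where
  Adj x y := x ≠ y ∧ (x⁻¹ * y ∈ S ∨ y⁻¹ * x ∈ S)
  symm := ⟨by
    rintro x y ⟨h, hs⟩
    exact ⟨h.symm, hs.symm⟩⟩
  loopless := ⟨fun x h => h.1 rfl⟩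

/-- The generating set `{δ_{1_Q}} ∪ V` of the wreath product `ℤ/2ℤ ≀_Q B`. -/
noncomputable def wreathGen {Q B : Type*} [Group Q] [Group B] (act : B →* Equiv.Perm Q)
    (V : Set B) : Set (Wreath Q (Multiplicative (ZMod 2)) B act) :=
  insert ⟨deltaFn (1 : Q) (Multiplicative.ofAdd (1 : ZMod 2)), 1⟩
    {w | ∃ v ∈ V, w = ⟨1, v⟩}


section AuxPush

variable {Q Q' A : Type*} [Group A]

open scoped Classical in
/-- Pushforward of a finitely supported function along an injective map. -/
noncomputable def pushFn (g : Q → Q') (φ : RestrictedProd Q A) : RestrictedProd Q' A :=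
  ⟨fun k => if h : ∃ x, g x = k then φ.1 h.choose else 1, by
    apply (φ.2.image g).subset
    intro k hk
    rw [Function.mem_mulSupport] at hk
    by_cases h : ∃ x, g x = k
    · rw [dif_pos h] at hk
      exact ⟨h.choose, hk, h.choose_spec⟩
    · rw [dif_neg h] at hk; exact absurd rfl hk⟩

open scoped Classical in
lemma pushFn_apply (g : Q → Q') (hg : Function.Injective g) (φ : RestrictedProd Q A) (x : Q) :
    (pushFn g φ).1 (g x) = φ.1 x := by
  have h : ∃ y, g y = g x := ⟨x, rfl⟩
  show (if h : ∃ y, g y = g x then φ.1 h.choose else 1) = φ.1 x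
  rw [dif_pos h, hg h.choose_spec]

open scoped Classical in
lemma pushFn_mul (g : Q → Q') (φ ψ : RestrictedProd Q A) :
    pushFn g (φ * ψ) = pushFn g φ * pushFn g ψ := by
  refine Subtype.ext (funext fun k => ?_)
  show (if h : ∃ x, g x = k then (φ * ψ).1 h.choose else 1)
    = (if h : ∃ x, g x = k then φ.1 h.choose else 1) *
      (if h : ∃ x, g x = k then ψ.1 h.choose else 1)
  by_cases h : ∃ x, g x = k
  · rw [dif_pos h, dif_pos h, dif_pos h]; rfl
  · rw [dif_neg h, dif_neg h, dif_neg h, one_mul]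

lemma pushFn_inj (g : Q → Q') (hg : Function.Injective g) :
    Function.Injective (pushFn g (A := A)) := by
  intro φ ψ h
  refine Subtype.ext (funext fun x => ?_)
  have := congrFun (congrArg Subtype.val h) (g x)
  rwa [pushFn_apply g hg, pushFn_apply g hg] at this

open scoped Classical in
lemma pushFn_delta (g : Q → Q') (hg : Function.Injective g) (q : Q) (a : A) :
    pushFn g (deltaFn q a) = deltaFn (g q) a := by
  refine Subtype.ext (funext fun k => ?_)
  show (if h : ∃ x, g x = k then (deltaFn q a).1 h.choose else 1)
      = if k = g q then a else 1
  by_cases h : ∃ x, g x = k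
  · rw [dif_pos h]
    show (if h.choose = q then a else 1) = if k = g q then a else 1
    by_cases hq : h.choose = q
    · rw [if_pos hq, if_pos (by rw [← h.choose_spec, hq])]
    · rw [if_neg hq, if_neg (fun e => hq (hg (h.choose_spec.trans e)))]
  · rw [dif_neg h, if_neg (fun e => h ⟨q, e.symm⟩)]

open scoped Classical in
lemma permAut_delta {B : Type*} [Group B] [Group Q] (p : B →* Q) (b : B) (q₀ : Q) (a : A) :
    (permAut (leftTransPerm p b) (deltaFn q₀ a) : RestrictedProd Q A)
      = deltaFn (p b * q₀) a := by
  refine Subtype.ext (funext fun q => ?_)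
  show (if (leftTransPerm p b)⁻¹ q = q₀ then a else 1) = if q = p b * q₀ then a else 1
  have hq : (leftTransPerm p b)⁻¹ q = (p b)⁻¹ * q := rfl
  rw [hq]
  by_cases h : q = p b * q₀
  · rw [if_pos h, if_pos (by rw [h, inv_mul_cancel_left])]
  · rw [if_neg h, if_neg (fun e => h (by rw [← e, mul_inv_cancel_left]))]

lemma wreathAction_apply {B : Type*} [Group B] [Group Q] (act : B →* Equiv.Perm Q)
    (b : B) (f : RestrictedProd Q A) :
    (wreathAction act b) f = permAut (act b) f := rfl

end AuxPush

/-- If `Cay(K,V)` contains `Cay(L,U)` as a labeled subgraph via an injective `ι`, and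
there is a bijection of `π(ι(L))` with `L'` making `L → L'` a surjective homomorphism `σ`,
then the Cayley graph of `ℤ/2ℤ ≀_{L'} L` with generating set `{δ} ∪ U` embeds as a
subgraph of the Cayley graph of `ℤ/2ℤ ≀_{K'} K` with generating set `{δ} ∪ V`. -/
theorem stmt_7 {K K' L L' : Type*} [Group K] [Group K'] [Group L] [Group L']
    (π : K →* K') (hπ : Function.Surjective π)
    (V : Set K) (hVfin : V.Finite) (hVgen : Subgroup.closure V = ⊤)
    (U : Set L) (hUgen : Subgroup.closure U = ⊤)
    (ι : L → K) (hι : Function.Injective ι)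
    (hsub : ∀ l : L, ∀ u ∈ U, ∃ v ∈ V, ι (l * u) = ι l * v)
    (σ : L →* L') (hσ : Function.Surjective σ)
    (hbij : ∀ l₁ l₂ : L, σ l₁ = σ l₂ ↔ π (ι l₁) = π (ι l₂)) :
    ∃ j : Wreath L' (Multiplicative (ZMod 2)) L (leftTransPerm σ) →
        Wreath K' (Multiplicative (ZMod 2)) K (leftTransPerm π),
      Function.Injective j ∧
        ∀ w₁ w₂, (cayleyGraph _ (wreathGen (leftTransPerm σ) U)).Adj w₁ w₂ →
          (cayleyGraph _ (wreathGen (leftTransPerm π) V)).Adj (j w₁) (j w₂) := by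
  classical
  set a : Multiplicative (ZMod 2) := Multiplicative.ofAdd (1 : ZMod 2) with ha
  let g : L' → K' := fun x => π (ι (Function.surjInv hσ x))
  have hgσ : ∀ l, g (σ l) = π (ι l) := fun l =>
    (hbij _ l).mp (Function.surjInv_eq hσ (σ l))
  have hg : Function.Injective g := by
    intro x y h
    obtain ⟨x, rfl⟩ := hσ x
    obtain ⟨y, rfl⟩ := hσ y
    rw [hgσ, hgσ] at h
    exact (hbij x y).mpr h
  let j : Wreath L' (Multiplicative (ZMod 2)) L (leftTransPerm σ) →
      Wreath K' (Multiplicative (ZMod 2)) K (leftTransPerm π) :=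
    fun w => ⟨pushFn g w.left, ι w.right⟩
  have hjleft : ∀ w, (j w).left = pushFn g w.left := fun _ => rfl
  have hjright : ∀ w, (j w).right = ι w.right := fun _ => rfl
  have hjinj : Function.Injective j := by
    intro w₁ w₂ h
    have h1 := congrArg SemidirectProduct.left h
    have h2 := congrArg SemidirectProduct.right h
    rw [hjleft, hjleft] at h1
    rw [hjright, hjright] at h2
    exact SemidirectProduct.ext (pushFn_inj g hg h1) (hι h2)
  have key : ∀ w₁ w₂ : Wreath L' (Multiplicative (ZMod 2)) L (leftTransPerm σ),
      w₁⁻¹ * w₂ ∈ wreathGen (leftTransPerm σ) U →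
      (j w₁)⁻¹ * (j w₂) ∈ wreathGen (leftTransPerm π) V := by
    intro w₁ w₂ hmem
    rw [wreathGen, Set.mem_insert_iff] at hmem
    rcases hmem with hδ | ⟨u, hu, huv⟩
    · have hw2 : w₂ = w₁ * ⟨deltaFn 1 a, 1⟩ := by
        rw [← mul_inv_cancel_left w₁ w₂, hδ]
      have hj2 : j w₂ = j w₁ * ⟨deltaFn 1 a, 1⟩ := by
        rw [hw2]
        refine SemidirectProduct.ext ?_ ?_
        · show pushFn g (w₁ * ⟨deltaFn 1 a, 1⟩).left
            = (j w₁).left * (wreathAction (leftTransPerm π)) (j w₁).right (deltaFn 1 a)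
          simp only [SemidirectProduct.mul_left, hjleft, hjright,
            wreathAction_apply, permAut_delta, mul_one, pushFn_mul,
            pushFn_delta g hg, hgσ]
        · show ι (w₁ * ⟨deltaFn 1 a, 1⟩).right = (j w₁).right * 1
          simp only [SemidirectProduct.mul_right, mul_one, hjright]
      rw [wreathGen, Set.mem_insert_iff]
      left
      rw [hj2, inv_mul_cancel_left]
    · obtain ⟨v, hv, hval⟩ := hsub w₁.right u hu
      have hw2 : w₂ = w₁ * ⟨1, u⟩ := by
        rw [← mul_inv_cancel_left w₁ w₂, huv]
      have hj2 : j w₂ = j w₁ * ⟨1, v⟩ := by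
        rw [hw2]
        refine SemidirectProduct.ext ?_ ?_
        · show pushFn g (w₁ * ⟨1, u⟩).left
            = (j w₁).left * (wreathAction (leftTransPerm π)) (j w₁).right 1
          simp only [SemidirectProduct.mul_left, map_one, mul_one, hjleft]
        · show ι (w₁ * ⟨1, u⟩).right = (j w₁).right * v
          simp only [SemidirectProduct.mul_right, hjright]
          exact hval
      rw [wreathGen, Set.mem_insert_iff]
      right
      refine ⟨v, hv, ?_⟩
      rw [hj2, inv_mul_cancel_left]
  refine ⟨j, hjinj, fun w₁ w₂ hadj => ?_⟩
  obtain ⟨hne, hgen⟩ := hadj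
  exact ⟨fun e => hne (hjinj e), hgen.imp (key w₁ w₂) (key w₂ w₁)⟩
end

section
/- Let p: Γ̃ → Γ be a covering of connected S-labeled graphs preserving labels and orientations. Then the identity map on generators s ↦ s extends to a surjective group homomorphism G(Γ̃) ↠ G(Γ), where G(Λ) = ⟨S | labels of all nontrivial simple closed paths in Λ⟩. -/
open SimpleGraph

/-- The label of a walk in an `S`-labeled graph: the product in the free group of the
labels of its edges. -/
def walkLabel {V S : Type*} {Γ : SimpleGraph V}
    (lab : ∀ ⦃x y : V⦄, Γ.Adj x y → FreeGroup S) :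
    ∀ {x y : V}, Γ.Walk x y → FreeGroup S
  | _, _, SimpleGraph.Walk.nil => 1
  | _, _, SimpleGraph.Walk.cons h w => lab h * walkLabel lab w

/-- An `S`-labeling of a graph: each oriented edge carries a label which is a generator
of the free group on `S` or the inverse of one, and opposite orientations of an edge
carry mutually inverse labels. -/
structure IsLabeling {V S : Type*} (Γ : SimpleGraph V)
    (lab : ∀ ⦃x y : V⦄, Γ.Adj x y → FreeGroup S) : Prop where
  gen : ∀ ⦃x y : V⦄ (h : Γ.Adj x y),
    ∃ s : S, lab h = FreeGroup.of s ∨ lab h = (FreeGroup.of s)⁻¹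
  inv : ∀ ⦃x y : V⦄ (h : Γ.Adj x y), lab h.symm = (lab h)⁻¹

/-- The labels of all nontrivial simple closed paths of a labeled graph. -/
def cycleLabels {V S : Type*} (Γ : SimpleGraph V)
    (lab : ∀ ⦃x y : V⦄, Γ.Adj x y → FreeGroup S) : Set (FreeGroup S) :=
  {g | ∃ (v : V) (w : Γ.Walk v v), w.IsCycle ∧ walkLabel lab w = g}

/-- The group `G(Γ)` defined by the graphical presentation `⟨S ∣ labels of simple
closed paths of Γ⟩`. -/
def graphGroup {V S : Type*} (Γ : SimpleGraph V)
    (lab : ∀ ⦃x y : V⦄, Γ.Adj x y → FreeGroup S) :=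
  FreeGroup S ⧸ Subgroup.normalClosure (cycleLabels Γ lab)

noncomputable instance {V S : Type*} (Γ : SimpleGraph V)
    (lab : ∀ ⦃x y : V⦄, Γ.Adj x y → FreeGroup S) : Group (graphGroup Γ lab) :=
  QuotientGroup.Quotient.group _

section Aux

open SimpleGraph

variable {V S : Type*} {Γ : SimpleGraph V} {lab : ∀ ⦃x y : V⦄, Γ.Adj x y → FreeGroup S}

@[simp] lemma walkLabel_nil {x : V} : walkLabel lab (SimpleGraph.Walk.nil : Γ.Walk x x) = 1 := rfl

@[simp] lemma walkLabel_cons {x y z : V} (h : Γ.Adj x y) (p : Γ.Walk y z) :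
    walkLabel lab (SimpleGraph.Walk.cons h p) = lab h * walkLabel lab p := rfl

lemma walkLabel_append {x y z : V} (p : Γ.Walk x y) (q : Γ.Walk y z) :
    walkLabel lab (p.append q) = walkLabel lab p * walkLabel lab q := by
  induction p with
  | nil => simp
  | cons h p ih => simp [ih, mul_assoc]

lemma path_edge_eq {x v : V} (q : Γ.Walk x v) (hq : q.IsPath) (he : s(v, x) ∈ q.edges) :
    ∃ h' : Γ.Adj x v, q = SimpleGraph.Walk.cons h' SimpleGraph.Walk.nil := by
  cases q with
  | nil => simp at he
  | cons h q' =>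
    rename_i y
    rw [Walk.edges_cons, List.mem_cons] at he
    rcases he with he | he
    · rw [Sym2.eq_iff] at he
      rcases he with ⟨hvx, hxy⟩ | ⟨hvy, -⟩
      · exact absurd hxy h.ne
      · subst hvy
        have hq' : q' = SimpleGraph.Walk.nil :=
          Walk.isPath_iff_eq_nil.mp hq.of_cons
        exact ⟨h, by rw [hq']⟩
    · have hx : x ∈ q'.support := q'.snd_mem_support_of_mem_edges he
      have := hq.support_nodup
      rw [Walk.support_cons, List.nodup_cons] at this
      exact absurd hx this.1

lemma closed_walkLabel_mem (hlab : IsLabeling Γ lab) :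
    ∀ (n : ℕ) (v : V) (w : Γ.Walk v v), w.length ≤ n →
      walkLabel lab w ∈ Subgroup.normalClosure (cycleLabels Γ lab) := by
  classical
  intro n
  induction n with
  | zero =>
    intro v w hw
    have : w = SimpleGraph.Walk.nil := Walk.nil_iff_eq_nil.mp (Walk.length_eq_zero_iff.mp (Nat.le_zero.mp hw))
    subst this
    simpa using Subgroup.one_mem _
  | succ n ih =>
    intro v w hw
    cases w with
    | nil => simpa using Subgroup.one_mem _
    | cons h r =>
      rename_i x
      rw [Walk.length_cons] at hw
      by_cases hnd : r.support.Nodup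
      · by_cases he : s(v, x) ∈ r.edges
        · obtain ⟨h', rfl⟩ := path_edge_eq r (Walk.IsPath.mk' hnd) he
          have hinv : lab h' = (lab h)⁻¹ := hlab.inv h
          simp only [walkLabel_cons, walkLabel_nil, hinv, mul_one, mul_inv_cancel]
          exact Subgroup.one_mem _
        · have hcyc : (SimpleGraph.Walk.cons h r).IsCycle := by
            refine ⟨⟨⟨?_⟩, by simp⟩, ?_⟩
            · rw [Walk.edges_cons]
              exact List.nodup_cons.mpr ⟨he, Walk.edges_nodup_of_support_nodup hnd⟩
            · rw [Walk.support_cons]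
              exact hnd
          exact Subgroup.subset_normalClosure ⟨v, _, hcyc, rfl⟩
      · obtain ⟨u, hu2⟩ := List.exists_duplicate_iff_not_nodup.mpr hnd
        have hcount : 2 ≤ r.support.count u := List.duplicate_iff_two_le_count.mp hu2
        have hu : u ∈ r.support := hu2.mem
        have hspec := r.take_spec hu
        have hcb : u ∈ (r.dropUntil u hu).support.tail := by
          by_contra hc
          have h0 : (r.dropUntil u hu).support.tail.count u = 0 := List.count_eq_zero.mpr hc
          have h1 : (r.takeUntil u hu).support.count u = 1 :=
            r.count_support_takeUntil_eq_one hu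
          have hsup : r.support
              = (r.takeUntil u hu).support ++ (r.dropUntil u hu).support.tail := by
            conv_lhs => rw [← hspec]
            rw [Walk.support_append]
          rw [hsup, List.count_append, h1, h0] at hcount
          omega
        obtain ⟨y, h2, b2, hbe⟩ : ∃ (y : V) (h2 : Γ.Adj u y) (b2 : Γ.Walk y v),
            r.dropUntil u hu = SimpleGraph.Walk.cons h2 b2 := by
          cases hb : r.dropUntil u hu with
          | nil => rw [hb] at hcb; simp at hcb
          | cons h2 b2 => exact ⟨_, h2, b2, rfl⟩
        have hcb2 : u ∈ b2.support := by
          rw [hbe] at hcb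
          simpa using hcb
        have hspec2 := b2.take_spec hcb2
        have hr : r = (r.takeUntil u hu).append
            (SimpleGraph.Walk.cons h2 ((b2.takeUntil u hcb2).append (b2.dropUntil u hcb2))) := by
          rw [hspec2, ← hbe, hspec]
        have hlen : r.length = (r.takeUntil u hu).length +
            ((b2.takeUntil u hcb2).length + (b2.dropUntil u hcb2).length + 1) := by
          conv_lhs => rw [hr]
          rw [Walk.length_append, Walk.length_cons, Walk.length_append]
        have m1 : walkLabel lab (SimpleGraph.Walk.cons h2 (b2.takeUntil u hcb2))
            ∈ Subgroup.normalClosure (cycleLabels Γ lab) := by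
          refine ih u _ ?_
          rw [Walk.length_cons]
          omega
        have m2 : walkLabel lab (SimpleGraph.Walk.cons h
            ((r.takeUntil u hu).append (b2.dropUntil u hcb2)))
            ∈ Subgroup.normalClosure (cycleLabels Γ lab) := by
          refine ih v _ ?_
          rw [Walk.length_cons, Walk.length_append]
          omega
        have key : walkLabel lab (SimpleGraph.Walk.cons h r)
            = ((lab h * walkLabel lab (r.takeUntil u hu))
                 * walkLabel lab (SimpleGraph.Walk.cons h2 (b2.takeUntil u hcb2))
                 * (lab h * walkLabel lab (r.takeUntil u hu))⁻¹)
              * walkLabel lab (SimpleGraph.Walk.cons h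
                  ((r.takeUntil u hu).append (b2.dropUntil u hcb2))) := by
          conv_lhs => rw [hr]
          simp only [walkLabel_cons, walkLabel_append]
          group
        rw [key]
        exact Subgroup.mul_mem _
          (Subgroup.normalClosure_normal.conj_mem _ m1 _) m2

end Aux

/-- Quotients from coverings: a label-preserving covering `p : Γ̃ → Γ` of connected
`S`-labeled graphs induces a surjective homomorphism `G(Γ̃) ↠ G(Γ)` which is the
identity `s ↦ s` on the generators. -/
theorem stmt_9 {V V' S : Type*} (Γ : SimpleGraph V) (Γ' : SimpleGraph V')
    (lab : ∀ ⦃x y : V⦄, Γ.Adj x y → FreeGroup S)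
    (lab' : ∀ ⦃x y : V'⦄, Γ'.Adj x y → FreeGroup S)
    (hlab : IsLabeling Γ lab) (hlab' : IsLabeling Γ' lab')
    (hconn : Γ.Connected) (hconn' : Γ'.Connected)
    (p : V' → V)
    (hadj : ∀ ⦃x y : V'⦄, Γ'.Adj x y → Γ.Adj (p x) (p y))
    (hpres : ∀ ⦃x y : V'⦄ (h : Γ'.Adj x y), lab (hadj h) = lab' h)
    (hcov : ∀ (x : V') (y : V), Γ.Adj (p x) y → ∃! x' : V', Γ'.Adj x x' ∧ p x' = y) :
    ∃ φ : graphGroup Γ' lab' →* graphGroup Γ lab,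
      Function.Surjective φ ∧
        ∀ s : S, φ (QuotientGroup.mk (FreeGroup.of s)) = QuotientGroup.mk (FreeGroup.of s) := by
    classical
  set N := Subgroup.normalClosure (cycleLabels Γ lab)
  set N' := Subgroup.normalClosure (cycleLabels Γ' lab')
  let f : Γ' →g Γ := ⟨p, fun {x y} h => hadj h⟩
  have hlabmap : ∀ {x y : V'} (w : Γ'.Walk x y),
      walkLabel lab (w.map f) = walkLabel lab' w := by
    intro x y w
    induction w with
    | nil => rfl
    | cons h q ihq =>
      rw [SimpleGraph.Walk.map_cons, walkLabel_cons, walkLabel_cons, ihq]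
      congr 1
      exact hpres h
  have hsub : cycleLabels Γ' lab' ⊆ (QuotientGroup.mk' N).ker := by
    rintro g ⟨v', w', hc, rfl⟩
    rw [SetLike.mem_coe, MonoidHom.mem_ker, QuotientGroup.mk'_apply,
      QuotientGroup.eq_one_iff]
    rw [← hlabmap w']
    exact closed_walkLabel_mem hlab (w'.map f).length (p v') (w'.map f) le_rfl
  have h1 : N' ≤ (QuotientGroup.mk' N).ker := Subgroup.normalClosure_le_normal hsub
  refine ⟨QuotientGroup.lift N' (QuotientGroup.mk' N)
    (fun g hg => MonoidHom.mem_ker.mp (h1 hg)), ?_, fun s => rfl⟩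
  intro y
  obtain ⟨g, rfl⟩ := QuotientGroup.mk'_surjective N y
  exact ⟨QuotientGroup.mk g, rfl⟩
end

section
/- Let W be a finite group generated by Σ, X ⊆ W, and C > 0 such that every conditionally negative definite function ψ on W satisfies sup_{x∈X} ψ(x) ≤ C · sup_{σ∈Σ} ψ(σ). Then every function f: W → H into a Hilbert space satisfies the relative Poincaré inequality (1/|X|) Σ_{(w,x)∈W×X} ‖f(w) − f(wx)‖² ≤ C|Σ| · Σ_{(w,σ)∈W×Σ} ‖f(w) − f(wσ)‖². -/
open Finset

lemma cnd_key {H : Type*} [NormedAddCommGroup H] [InnerProductSpace ℝ H]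
    {n : ℕ} (a : Fin n → H) (c : Fin n → ℝ) (hc : ∑ i, c i = 0) :
    ∑ i, ∑ j, c i * c j * ‖a i - a j‖ ^ 2 ≤ 0 := by
  have expand : ∀ i j, c i * c j * ‖a i - a j‖ ^ 2 =
      c i * ‖a i‖ ^ 2 * c j + c j * ‖a j‖ ^ 2 * c i
        - 2 * (inner ℝ (c i • a i) (c j • a j) : ℝ) := by
    intro i j
    rw [@norm_sub_sq_real, real_inner_smul_left, real_inner_smul_right]
    ring
  have e1 : ∀ A : Fin n → ℝ, ∑ i, ∑ j, A i * c j = 0 := by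
    intro A
    simp [← Finset.mul_sum, hc]
  have e2 : ∑ i, ∑ j, c j * ‖a j‖ ^ 2 * c i = 0 := by
    rw [Finset.sum_comm]
    exact e1 _
  have e3 : ∑ i, ∑ j, (inner ℝ (c i • a i) (c j • a j) : ℝ)
      = inner ℝ (∑ i, c i • a i) (∑ j, c j • a j) := by
    rw [sum_inner]
    exact Finset.sum_congr rfl fun i _ => (inner_sum _ _ _).symm
  have hnn : (0:ℝ) ≤ inner ℝ (∑ i, c i • a i) (∑ j, c j • a j) :=
    real_inner_self_nonneg
  calc ∑ i, ∑ j, c i * c j * ‖a i - a j‖ ^ 2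
      = ∑ i, ∑ j, (c i * ‖a i‖ ^ 2 * c j + c j * ‖a j‖ ^ 2 * c i
          - 2 * (inner ℝ (c i • a i) (c j • a j) : ℝ)) := by
        simp_rw [expand]
    _ = (∑ i, ∑ j, c i * ‖a i‖ ^ 2 * c j) + (∑ i, ∑ j, c j * ‖a j‖ ^ 2 * c i)
          - 2 * ∑ i, ∑ j, (inner ℝ (c i • a i) (c j • a j) : ℝ) := by
        simp_rw [Finset.sum_sub_distrib, Finset.sum_add_distrib, Finset.mul_sum]
    _ = -(2 * (inner ℝ (∑ i, c i • a i) (∑ j, c j • a j) : ℝ)) := by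
        rw [e1, e2, e3]; ring
    _ ≤ 0 := by linarith

/-- If every conditionally negative definite function `ψ` on a finite group `W`
satisfies `sup_{x ∈ X} ψ(x) ≤ C · sup_{σ ∈ Σ} ψ(σ)`, then every `f : W → H` into a
Hilbert space satisfies the relative Poincaré inequality
`(1/|X|) Σ_{(w,x) ∈ W×X} ‖f(w) − f(wx)‖² ≤ C|Σ| Σ_{(w,σ) ∈ W×Σ} ‖f(w) − f(wσ)‖²`. -/
theorem stmt_12 {W : Type*} [Group W] [Fintype W]
    (S : Finset W) (hSne : S.Nonempty) (hSgen : Subgroup.closure (S : Set W) = ⊤)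
    (X : Finset W) (hXne : X.Nonempty) (C : ℝ) (hC : 0 < C)
    (hyp : ∀ ψ : W → ℝ, IsCondNegDefFn ψ → X.sup' hXne ψ ≤ C * S.sup' hSne ψ)
    {H : Type*} [NormedAddCommGroup H] [InnerProductSpace ℝ H] [CompleteSpace H]
    (f : W → H) :
    (1 / (X.card : ℝ)) * ∑ w : W, ∑ x ∈ X, ‖f w - f (w * x)‖ ^ 2 ≤
      C * (S.card : ℝ) * ∑ w : W, ∑ σ ∈ S, ‖f w - f (w * σ)‖ ^ 2 := by
  set ψ : W → ℝ := fun g => ∑ v : W, ‖f v - f (v * g)‖ ^ 2 with hψ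
  have hψnn : ∀ g, 0 ≤ ψ g := fun g => Finset.sum_nonneg fun v _ => by positivity
  have hcnd : IsCondNegDefFn ψ := by
    refine ⟨by simp [hψ], ?_, ?_⟩
    · intro g
      simp only [hψ]
      rw [← Fintype.sum_equiv (Equiv.mulRight g) _ (fun v => ‖f v - f (v * g⁻¹)‖ ^ 2)]
      intro v
      simp [Equiv.mulRight, mul_assoc, norm_sub_rev]
    · intro n g c hc
      have : ∀ i j, ψ ((g j)⁻¹ * g i) = ∑ v : W, ‖f (v * g i) - f (v * g j)‖ ^ 2 := by
        intro i j
        simp only [hψ]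
        rw [← Fintype.sum_equiv (Equiv.mulRight (g j)) _
          (fun v => ‖f v - f (v * ((g j)⁻¹ * g i))‖ ^ 2)]
        intro v
        simp [Equiv.mulRight, mul_assoc, norm_sub_rev]
      simp_rw [this, Finset.mul_sum]
      rw [show ∑ i, ∑ j, ∑ v : W, c i * c j * ‖f (v * g i) - f (v * g j)‖ ^ 2
          = ∑ v : W, ∑ i, ∑ j, c i * c j * ‖f (v * g i) - f (v * g j)‖ ^ 2 by
        calc ∑ i, ∑ j, ∑ v : W, c i * c j * ‖f (v * g i) - f (v * g j)‖ ^ 2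
            = ∑ i, ∑ v : W, ∑ j, c i * c j * ‖f (v * g i) - f (v * g j)‖ ^ 2 :=
              Finset.sum_congr rfl fun i _ => Finset.sum_comm
          _ = ∑ v : W, ∑ i, ∑ j, c i * c j * ‖f (v * g i) - f (v * g j)‖ ^ 2 :=
              Finset.sum_comm]
      exact Finset.sum_nonpos fun v _ => cnd_key (fun i => f (v * g i)) c hc
  have hmain := hyp ψ hcnd
  have hX : ∑ w : W, ∑ x ∈ X, ‖f w - f (w * x)‖ ^ 2 = ∑ x ∈ X, ψ x := by
    rw [Finset.sum_comm]
  have hS : ∑ w : W, ∑ σ ∈ S, ‖f w - f (w * σ)‖ ^ 2 = ∑ σ ∈ S, ψ σ := by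
    rw [Finset.sum_comm]
  rw [hX, hS]
  have h1 : (1 / (X.card : ℝ)) * ∑ x ∈ X, ψ x ≤ X.sup' hXne ψ := by
    have hcard : (0 : ℝ) < X.card := by positivity
    rw [div_mul_eq_mul_div, one_mul, div_le_iff₀ hcard]
    calc ∑ x ∈ X, ψ x ≤ ∑ x ∈ X, X.sup' hXne ψ :=
          Finset.sum_le_sum fun x hx => Finset.le_sup' ψ hx
      _ = X.sup' hXne ψ * X.card := by rw [Finset.sum_const]; ring
  have h2 : S.sup' hSne ψ ≤ ∑ σ ∈ S, ψ σ :=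
    Finset.sup'_le _ _ fun σ hσ =>
      Finset.single_le_sum (fun i _ => hψnn i) hσ
  have h3 : (0:ℝ) ≤ ∑ σ ∈ S, ψ σ := Finset.sum_nonneg fun σ _ => hψnn σ
  have h4 : (1:ℝ) ≤ S.card := by exact_mod_cast hSne.card_pos
  calc (1 / (X.card : ℝ)) * ∑ x ∈ X, ψ x ≤ X.sup' hXne ψ := h1
    _ ≤ C * S.sup' hSne ψ := hmain
    _ ≤ C * ∑ σ ∈ S, ψ σ := by nlinarith
    _ ≤ C * (S.card : ℝ) * ∑ σ ∈ S, ψ σ := by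
        have hCS : C ≤ C * S.card := by nlinarith
        exact mul_le_mul_of_nonneg_right hCS h3
end

section
/- Let ψ be a conditionally negative definite function on a group L = A ⋊_α K (A abelian), and suppose there are ε', δ' > 0 such that every normalized positive definite function φ on L with inf_{v∈V}|φ(v)| ≥ 1 − δ' satisfies inf_{y∈α(K)(a)}|φ(y)| ≥ ε', where V is a generating set of L containing a ∈ A. Then sup_{y∈α(K)(a)} ψ(y) ≤ ((−log ε')/δ') · sup_{v∈V} ψ(v). -/
open Finset

namespace Stmt17Aux

variable {n : ℕ}

/-- symmetric entrywise-nonnegative-quadratic-form kernels on `Fin n` -/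
def SymQF (R : Fin n → Fin n → ℝ) : Prop :=
  (∀ i j, R i j = R j i) ∧ ∀ x : Fin n → ℝ, 0 ≤ ∑ i, ∑ j, x i * x j * R i j

lemma symqf_one : SymQF (fun _ _ : Fin n => (1:ℝ)) := by
  refine ⟨fun _ _ => rfl, fun x => ?_⟩
  have h : ∑ i, ∑ j, x i * x j * 1 = (∑ i, x i) * (∑ j, x j) := by
    rw [Finset.sum_mul]
    refine Finset.sum_congr rfl fun i _ => ?_
    rw [Finset.mul_sum]
    exact Finset.sum_congr rfl fun j _ => by ring
  rw [h]
  exact mul_self_nonneg _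

lemma symqf_posSemidef {R : Fin n → Fin n → ℝ} (h : SymQF R) :
    Matrix.PosSemidef (Matrix.of R) := by
  refine Matrix.posSemidef_iff_dotProduct_mulVec.mpr ⟨?_, ?_⟩
  · ext i j
    simp [Matrix.conjTranspose_apply, h.1 i j]
  · intro x
    have hx := h.2 x
    have heq : dotProduct (star x) ((Matrix.of R).mulVec x)
        = ∑ i, ∑ j, x i * x j * R i j := by
      simp only [dotProduct, Matrix.mulVec, Pi.star_apply,
        star_trivial, Matrix.of_apply, Finset.mul_sum]
      exact Finset.sum_congr rfl fun i _ => Finset.sum_congr rfl fun j _ => by ring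
    rw [heq]
    exact hx

lemma symqf_mul {R N : Fin n → Fin n → ℝ} (hR : SymQF R) (hN : SymQF N) :
    SymQF (fun i j => R i j * N i j) := by
  obtain ⟨m, B, hB⟩ := Matrix.posSemidef_iff_eq_sum_vecMulVec.mp (symqf_posSemidef hN)
  have hNij : ∀ i j, N i j = ∑ k, B k i * B k j := by
    intro i j
    have h := congrFun (congrFun hB i) j
    simpa [Matrix.sum_apply, Matrix.vecMulVec_apply] using h
  refine ⟨fun i j => show R i j * N i j = R j i * N j i by rw [hR.1 i j, hN.1 i j], fun x => ?_⟩
  have key : ∑ i, ∑ j, x i * x j * (R i j * N i j)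
      = ∑ k, ∑ i, ∑ j, (x i * B k i) * (x j * B k j) * R i j := by
    have h1 : ∀ i j, x i * x j * (R i j * N i j)
        = ∑ k, (x i * B k i) * (x j * B k j) * R i j := by
      intro i j
      rw [hNij i j, Finset.mul_sum, Finset.mul_sum]
      exact Finset.sum_congr rfl fun k _ => by ring
    calc ∑ i, ∑ j, x i * x j * (R i j * N i j)
        = ∑ i, ∑ j, ∑ k, (x i * B k i) * (x j * B k j) * R i j :=
          Finset.sum_congr rfl fun i _ => Finset.sum_congr rfl fun j _ => h1 i j
      _ = ∑ i, ∑ k, ∑ j, (x i * B k i) * (x j * B k j) * R i j :=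
          Finset.sum_congr rfl fun i _ => Finset.sum_comm
      _ = ∑ k, ∑ i, ∑ j, (x i * B k i) * (x j * B k j) * R i j := Finset.sum_comm
  rw [key]
  exact Finset.sum_nonneg fun k _ => hR.2 (fun i => x i * B k i)

lemma symqf_pow {R : Fin n → Fin n → ℝ} (hR : SymQF R) (m : ℕ) :
    SymQF (fun i j => R i j ^ m) := by
  induction m with
  | zero => simpa using (symqf_one (n := n))
  | succ m ih =>
      have := symqf_mul ih hR
      simpa [pow_succ] using this





lemma symqf_exp {R : Fin n → Fin n → ℝ} (hR : SymQF R) :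
    SymQF (fun i j => Real.exp (R i j)) := by
  refine ⟨fun i j => show Real.exp (R i j) = Real.exp (R j i) by rw [hR.1 i j], fun x => ?_⟩
  have hexp : ∀ y : ℝ, Real.exp y = ∑' m : ℕ, y ^ m / m.factorial := by
    intro y
    rw [Real.exp_eq_exp_ℝ, NormedSpace.exp_eq_tsum_div]
  have hsum1 : ∀ p : Fin n × Fin n, Summable (fun m : ℕ => x p.1 * x p.2 * (R p.1 p.2 ^ m / m.factorial)) :=
    fun p => Summable.mul_left _ (Real.summable_pow_div_factorial _)
  have hprod : ∀ f : Fin n → Fin n → ℝ,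
      ∑ p : Fin n × Fin n, f p.1 p.2 = ∑ i, ∑ j, f i j := by
    intro f
    exact Finset.sum_product (s := univ) (t := univ) (f := fun p => f p.1 p.2)
  have key : ∑ i, ∑ j, x i * x j * Real.exp (R i j)
      = ∑' m : ℕ, ∑ p : Fin n × Fin n, x p.1 * x p.2 * (R p.1 p.2 ^ m / m.factorial) := by
    rw [← hprod fun i j => x i * x j * Real.exp (R i j)]
    rw [Finset.sum_congr rfl fun p _ =>
      (by rw [hexp, tsum_mul_left] :
        x p.1 * x p.2 * Real.exp (R p.1 p.2)
          = ∑' m : ℕ, x p.1 * x p.2 * (R p.1 p.2 ^ m / m.factorial))]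
    exact (Summable.tsum_finsetSum fun p _ => hsum1 p).symm
  rw [key]
  refine tsum_nonneg fun m => ?_
  rw [hprod fun i j => x i * x j * (R i j ^ m / m.factorial)]
  have h := (symqf_pow hR m).2 x
  have heq : ∑ i, ∑ j, x i * x j * (R i j ^ m / m.factorial)
      = (∑ i, ∑ j, x i * x j * R i j ^ m) / m.factorial := by
    rw [Finset.sum_div]
    refine Finset.sum_congr rfl fun i _ => ?_
    rw [Finset.sum_div]
    exact Finset.sum_congr rfl fun j _ => by ring
  rw [heq]
  positivity


lemma symqf_complex {R : Fin n → Fin n → ℝ} (hR : SymQF R) (c : Fin n → ℂ) :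
    0 ≤ (∑ i, ∑ j, c i * (starRingEnd ℂ) (c j) * (R i j : ℂ)).re ∧
      (∑ i, ∑ j, c i * (starRingEnd ℂ) (c j) * (R i j : ℂ)).im = 0 := by
  constructor
  · rw [Complex.re_sum]
    rw [Finset.sum_congr rfl fun i (_ : i ∈ univ) => Complex.re_sum univ _]
    have h : ∀ i j, (c i * (starRingEnd ℂ) (c j) * (R i j : ℂ)).re
        = (c i).re * (c j).re * R i j + (c i).im * (c j).im * R i j := by
      intro i j
      simp only [Complex.mul_re, Complex.mul_im, Complex.conj_re, Complex.conj_im,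
        Complex.ofReal_re, Complex.ofReal_im]
      ring
    rw [Finset.sum_congr rfl fun i (_ : i ∈ univ) =>
      Finset.sum_congr rfl fun j (_ : j ∈ univ) => h i j]
    simp_rw [Finset.sum_add_distrib]
    exact add_nonneg (hR.2 fun i => (c i).re) (hR.2 fun i => (c i).im)
  · rw [Complex.im_sum]
    rw [Finset.sum_congr rfl fun i (_ : i ∈ univ) => Complex.im_sum univ _]
    have h : ∀ i j, (c i * (starRingEnd ℂ) (c j) * (R i j : ℂ)).im
        = (c i).im * (c j).re * R i j - (c i).re * (c j).im * R i j := by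
      intro i j
      simp only [Complex.mul_re, Complex.mul_im, Complex.conj_re, Complex.conj_im,
        Complex.ofReal_re, Complex.ofReal_im]
      ring
    rw [Finset.sum_congr rfl fun i (_ : i ∈ univ) =>
      Finset.sum_congr rfl fun j (_ : j ∈ univ) => h i j]
    simp_rw [Finset.sum_sub_distrib]
    have hswap : ∑ i, ∑ j, (c i).im * (c j).re * R i j
        = ∑ i, ∑ j, (c i).re * (c j).im * R i j := by
      rw [Finset.sum_comm]
      refine Finset.sum_congr rfl fun i _ => Finset.sum_congr rfl fun j _ => ?_
      rw [hR.1 j i]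
      ring
    rw [hswap, sub_self]


lemma cnd_kernel {F : Type*} [Group F] {ψ : F → ℝ} (hψ : IsCondNegDefFn ψ) {n : ℕ}
    (g : Fin n → F) {t : ℝ} (ht : 0 ≤ t) :
    SymQF (fun i j => t * (ψ (g i) + ψ (g j) - ψ ((g j)⁻¹ * g i))) := by
  obtain ⟨hone, hsym, hqf⟩ := hψ
  constructor
  · intro i j
    have hs : ψ ((g i)⁻¹ * g j) = ψ ((g j)⁻¹ * g i) := by
      rw [← hsym ((g j)⁻¹ * g i)]
      simp [mul_inv_rev]
    show t * (ψ (g i) + ψ (g j) - ψ ((g j)⁻¹ * g i))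
        = t * (ψ (g j) + ψ (g i) - ψ ((g i)⁻¹ * g j))
    rw [hs]
    ring
  · intro x
    set s := ∑ i, x i with hs
    set P := ∑ i, x i * ψ (g i) with hP
    set D := ∑ i, ∑ j, x i * x j * ψ ((g j)⁻¹ * g i) with hD
    clear_value s P D
    have key : D ≤ s * P + s * P := by
      have E := hqf (n + 1) (Fin.cons 1 g) (Fin.cons (-s) x)
        (by rw [Fin.sum_cons]; simp [hs])
      simp only [Fin.sum_univ_succ, Fin.cons_zero, Fin.cons_succ, inv_one, one_mul,
        mul_one, hone, mul_zero, zero_add, hsym] at E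
      rw [Finset.sum_add_distrib] at E
      have e1 : ∑ j, -s * x j * ψ (g j) = -(s * P) := by
        rw [hP, Finset.mul_sum, ← Finset.sum_neg_distrib]
        exact Finset.sum_congr rfl fun j _ => by ring
      have e2 : ∑ i, x i * -s * ψ (g i) = -(s * P) := by
        rw [hP, Finset.mul_sum, ← Finset.sum_neg_distrib]
        exact Finset.sum_congr rfl fun i _ => by ring
      rw [e1, e2] at E
      rw [hD]
      linarith [E]
    have h1 : ∑ i, ∑ j, x i * x j * ψ (g i) = P * s := by
      rw [hP, Finset.sum_mul]
      refine Finset.sum_congr rfl fun i _ => ?_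
      rw [hs, Finset.mul_sum]
      exact Finset.sum_congr rfl fun j _ => by ring
    have h2 : ∑ i, ∑ j, x i * x j * ψ (g j) = P * s := by
      rw [Finset.sum_comm, hP, Finset.sum_mul]
      refine Finset.sum_congr rfl fun j _ => ?_
      rw [hs, Finset.mul_sum]
      exact Finset.sum_congr rfl fun i _ => by ring
    have expand : ∑ i, ∑ j, x i * x j * (t * (ψ (g i) + ψ (g j) - ψ ((g j)⁻¹ * g i)))
        = t * (P * s) + t * (P * s) - t * D := by
      have h3 : ∀ i j, x i * x j * (t * (ψ (g i) + ψ (g j) - ψ ((g j)⁻¹ * g i)))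
          = t * (x i * x j * ψ (g i)) + t * (x i * x j * ψ (g j))
            - t * (x i * x j * ψ ((g j)⁻¹ * g i)) := fun i j => by ring
      rw [Finset.sum_congr rfl fun i (_ : i ∈ univ) =>
        Finset.sum_congr rfl fun j (_ : j ∈ univ) => h3 i j]
      simp only [Finset.sum_add_distrib, Finset.sum_sub_distrib, ← Finset.mul_sum]
      rw [h1, h2, hD]
    show 0 ≤ ∑ i, ∑ j, x i * x j * (t * (ψ (g i) + ψ (g j) - ψ ((g j)⁻¹ * g i)))
    rw [expand]
    have h4 : 0 ≤ P * s + P * s - D := by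
      have : s * P = P * s := mul_comm _ _
      linarith [key]
    nlinarith [ht, h4]

lemma schoenberg {F : Type*} [Group F] {ψ : F → ℝ} (hψ : IsCondNegDefFn ψ) {t : ℝ}
    (ht : 0 ≤ t) : IsPosDefFn (fun y => ((Real.exp (-(t * ψ y)) : ℝ) : ℂ)) := by
  intro n g c
  have hker := cnd_kernel hψ g ht
  have hE := symqf_exp hker
  set d : Fin n → ℂ := fun i => c i * ((Real.exp (-(t * ψ (g i))) : ℝ) : ℂ) with hd
  have hid : ∀ i j, c i * (starRingEnd ℂ) (c j)
        * ((Real.exp (-(t * ψ ((g j)⁻¹ * g i))) : ℝ) : ℂ)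
      = d i * (starRingEnd ℂ) (d j)
        * ((Real.exp (t * (ψ (g i) + ψ (g j) - ψ ((g j)⁻¹ * g i))) : ℝ) : ℂ) := by
    intro i j
    rw [hd]
    simp only [map_mul, Complex.conj_ofReal]
    have hr : Real.exp (-(t * ψ (g i))) * Real.exp (-(t * ψ (g j)))
        * Real.exp (t * (ψ (g i) + ψ (g j) - ψ ((g j)⁻¹ * g i)))
        = Real.exp (-(t * ψ ((g j)⁻¹ * g i))) := by
      rw [← Real.exp_add, ← Real.exp_add]
      ring_nf
    calc c i * (starRingEnd ℂ) (c j) * ((Real.exp (-(t * ψ ((g j)⁻¹ * g i))) : ℝ) : ℂ)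
        = c i * (starRingEnd ℂ) (c j)
          * ((Real.exp (-(t * ψ (g i))) * Real.exp (-(t * ψ (g j)))
            * Real.exp (t * (ψ (g i) + ψ (g j) - ψ ((g j)⁻¹ * g i))) : ℝ) : ℂ) := by
          rw [hr]
      _ = c i * ((Real.exp (-(t * ψ (g i))) : ℝ) : ℂ)
          * ((starRingEnd ℂ) (c j) * ((Real.exp (-(t * ψ (g j))) : ℝ) : ℂ))
          * ((Real.exp (t * (ψ (g i) + ψ (g j) - ψ ((g j)⁻¹ * g i))) : ℝ) : ℂ) := by
          push_cast
          ring
  rw [Finset.sum_congr rfl fun i (_ : i ∈ univ) =>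
    Finset.sum_congr rfl fun j (_ : j ∈ univ) => hid i j]
  exact symqf_complex hE d


end Stmt17Aux

/-- Let `ψ` be conditionally negative definite on `L = A ⋊_α K` (`A` abelian), and
suppose there are `ε', δ' > 0` such that every normalized positive definite `φ` on `L`
with `inf_{v ∈ V} |φ(v)| ≥ 1 − δ'` satisfies `inf_{y ∈ α(K)(a)} |φ(y)| ≥ ε'`, where `V`
is a generating set of `L` containing `a ∈ A`. Then
`sup_{y ∈ α(K)(a)} ψ(y) ≤ ((−log ε')/δ') · sup_{v ∈ V} ψ(v)`. -/
theorem stmt_17 {A K : Type*} [CommGroup A] [Group K] (α : K →* MulAut A)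
    (a : A) (V : Set (A ⋊[α] K)) (hVfin : V.Finite) (hVne : V.Nonempty)
    (hVgen : Subgroup.closure V = ⊤) (haV : SemidirectProduct.inl a ∈ V)
    (ε' δ' : ℝ) (hε' : 0 < ε') (hδ' : 0 < δ')
    (hyp : ∀ φ : A ⋊[α] K → ℂ, IsPosDefFn φ → φ 1 = 1 →
      (∀ v ∈ V, 1 - δ' ≤ ‖φ v‖) →
      ∀ k : K, ε' ≤ ‖φ (SemidirectProduct.inl (α k a))‖)
    (ψ : A ⋊[α] K → ℝ) (hψ : IsCondNegDefFn ψ) :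
    ∀ k : K, ψ (SemidirectProduct.inl (α k a)) ≤
      ((-Real.log ε') / δ') * sSup (ψ '' V) := by
  obtain ⟨hone, hsym, hqf⟩ := hψ
  -- ψ is nonnegative
  have hnonneg : ∀ y : A ⋊[α] K, 0 ≤ ψ y := by
    intro y
    have h := hqf 2 ![1, y] ![1, -1] (by simp [Fin.sum_univ_two])
    simp [Fin.sum_univ_two, hone, hsym] at h
    linarith
  -- ε' ≤ 1
  have hε1 : ε' ≤ 1 := by
    have hpd1 : IsPosDefFn (fun _ : A ⋊[α] K => (1 : ℂ)) := by
      intro n g c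
      have h : ∑ i, ∑ j, c i * (starRingEnd ℂ) (c j) * (1 : ℂ)
          = (∑ i, c i) * (starRingEnd ℂ) (∑ j, c j) := by
        rw [map_sum, Finset.sum_mul]
        refine Finset.sum_congr rfl fun i _ => ?_
        rw [Finset.mul_sum]
        exact Finset.sum_congr rfl fun j _ => by ring
      rw [h, Complex.mul_conj]
      constructor
      · simp [Complex.normSq_nonneg]
      · simp
    have := hyp _ hpd1 rfl (fun v _ => by simp; linarith) 1
    simpa using this
  have hLlog : 0 ≤ -Real.log ε' := by
    have := Real.log_nonpos (le_of_lt hε') hε1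
    linarith
  have hbdd : BddAbove (ψ '' V) := (hVfin.image ψ).bddAbove
  set S := sSup (ψ '' V) with hS
  have hle : ∀ v ∈ V, ψ v ≤ S := fun v hv => le_csSup hbdd ⟨v, hv, rfl⟩
  have hS0 : 0 ≤ S := le_trans (hnonneg _) (hle _ haV)
  intro k
  set y : A ⋊[α] K := SemidirectProduct.inl (α k a) with hy
  -- the key估计 for any admissible t
  have H : ∀ t : ℝ, 0 < t → (∀ v ∈ V, t * ψ v ≤ δ') →
      ψ y ≤ (-Real.log ε') / t := by
    intro t ht htV
    set φ : A ⋊[α] K → ℂ := fun z => ((Real.exp (-(t * ψ z)) : ℝ) : ℂ) with hφ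
    have hpd : IsPosDefFn φ := Stmt17Aux.schoenberg ⟨hone, hsym, hqf⟩ (le_of_lt ht)
    have hφ1 : φ 1 = 1 := by
      rw [hφ]
      simp [hone]
    have hφV : ∀ v ∈ V, 1 - δ' ≤ ‖φ v‖ := by
      intro v hv
      rw [hφ]
      simp only [Complex.norm_real, Real.norm_eq_abs, Real.abs_exp]
      have h1 : -(t * ψ v) + 1 ≤ Real.exp (-(t * ψ v)) := Real.add_one_le_exp _
      have h2 := htV v hv
      linarith
    have hcon := hyp φ hpd hφ1 hφV k
    rw [hφ] at hcon
    simp only [Complex.norm_real, Real.norm_eq_abs, Real.abs_exp] at hcon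
    have hlog : Real.log ε' ≤ -(t * ψ y) := by
      calc Real.log ε' ≤ Real.log (Real.exp (-(t * ψ y))) :=
            Real.log_le_log hε' hcon
        _ = -(t * ψ y) := Real.log_exp _
    rw [le_div_iff₀ ht]
    linarith
  by_cases hSpos : 0 < S
  · have ht : 0 < δ' / S := div_pos hδ' hSpos
    have hcond : ∀ v ∈ V, (δ' / S) * ψ v ≤ δ' := by
      intro v hv
      have h1 : (δ' / S) * ψ v ≤ (δ' / S) * S :=
        mul_le_mul_of_nonneg_left (hle v hv) (le_of_lt ht)
      have h2 : (δ' / S) * S = δ' := div_mul_cancel₀ _ (ne_of_gt hSpos)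
      linarith
    have := H (δ' / S) ht hcond
    calc ψ y ≤ (-Real.log ε') / (δ' / S) := this
      _ = ((-Real.log ε') / δ') * S := by
          field_simp
  · have hSeq : S = 0 := le_antisymm (not_lt.mp hSpos) hS0
    have hψy : ψ y ≤ 0 := by
      by_contra hpos
      push_neg at hpos
      set t := ((-Real.log ε') + 1) / ψ y with htdef
      have ht : 0 < t := div_pos (by linarith) hpos
      have hcond : ∀ v ∈ V, t * ψ v ≤ δ' := by
        intro v hv
        have h1 : ψ v ≤ 0 := by
          have := hle v hv
          rw [hSeq] at this
          exact this
        have := hnonneg v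
        have hv0 : ψ v = 0 := le_antisymm h1 this
        rw [hv0, mul_zero]
        exact le_of_lt hδ'
      have hb := H t ht hcond
      have hkey : ψ y * ((-Real.log ε') + 1) ≤ (-Real.log ε') * ψ y := by
        have h2 : ψ y * t ≤ -Real.log ε' := (le_div_iff₀ ht).mp hb
        calc ψ y * ((-Real.log ε') + 1) = (ψ y * t) * ψ y := by
              rw [htdef]
              field_simp
          _ ≤ (-Real.log ε') * ψ y := by
              exact mul_le_mul_of_nonneg_right h2 (le_of_lt hpos)
      nlinarith
    rw [hSeq, mul_zero]
    exact hψy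
end
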